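/- Let ω be a 2-ranking on a finite PCS Σ, δ, ε ≥ 0 integers, G = D(ω;δ) the derived PCR defined by (a,b) ∈ G iff {a,a*} ∩ {b,b*} = ∅ and (ω_{ab*} = ∞ or ω_{ab*} > δ + max(ω_{ab}, ω_{a*b*})), and M(ω;ε) = {a ∈ Σ : ω_{aa} < ω_{a*a*} − ε}. Then M(ω;ε) is G-coherent and forward-closed with respect to G, and consequently ⟨M(ω;ε);G⟩ is nonempty. -/
import Mathlib


universe u v

structure PCS (α : Type*) where
  star : α → α
  zero : α
  star_star : ∀ a, star (star a) = a
  star_ne_self : ∀ a, star a ≠ a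

variable {α : Type*}

/-- A pointed complemented relation (PCR) over the PCS `P`. -/
def IsPCR (P : PCS α) (G : Set (α × α)) : Prop :=
  (∀ a, (P.zero, a) ∈ G) ∧ ∀ a b, (a, b) ∈ G ↔ (P.star b, P.star a) ∈ G

/-- `a ≤_G b`: the reflexive-transitive closure of the relation `G`. -/
def pcrLe (G : Set (α × α)) (a b : α) : Prop :=
  Relation.ReflTransGen (fun x y => (x, y) ∈ G) a b

/-- A set `S` is `G`-coherent if no `a, b ∈ S` satisfy `a ≤_G b*`. -/
def Coherent (P : PCS α) (G : Set (α × α)) (S : Set α) : Prop :=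
  ∀ a ∈ S, ∀ b ∈ S, ¬ pcrLe G a (P.star b)

/-- Forward closure `↑S = {b | ∃ a ∈ S, a ≤_G b}`. -/
def upClosure (G : Set (α × α)) (S : Set α) : Set α :=
  {b | ∃ a ∈ S, pcrLe G a b}

/-- Maximal `G`-coherent subsets; the members of the dual space `G°`. -/
def MaxCoherent (P : PCS α) (G : Set (α × α)) (S : Set α) : Prop :=
  Coherent P G S ∧ ∀ T, Coherent P G T → S ⊆ T → S = T

/-- `G` is non-degenerate: no `a` satisfies both `a ≤_G a*` and `a* ≤_G a`. -/
def Nondegenerate (P : PCS α) (G : Set (α × α)) : Prop :=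
  ∀ a, ¬ (pcrLe G a (P.star a) ∧ pcrLe G (P.star a) a)

/-- A complete `*`-selection: exactly one of `a`, `a*` belongs to `S`, for each `a`. -/
def CompleteSel (P : PCS α) (S : Set α) : Prop :=
  ∀ a, Xor' (a ∈ S) (P.star a ∈ S)

/-- The half-space `⟨S;G⟩ = {u ∈ G° : S ⊆ u}`. -/
def halfspace (P : PCS α) (G : Set (α × α)) (S : Set α) : Set (Set α) :=
  {u | MaxCoherent P G u ∧ S ⊆ u}

/-- Coherent projection `coh_G(T) = ↑T ∖ (↑T)*`. -/
def cohProj (P : PCS α) (G : Set (α × α)) (T : Set α) : Set α :=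
  upClosure G T \ (P.star '' upClosure G T)

/-- Morphisms of PCRs. -/
def IsPCRHom {β : Type*} (P : PCS α) (Q : PCS β) (G : Set (α × α)) (H : Set (β × β))
    (f : α → β) : Prop :=
  f P.zero = Q.zero ∧ (∀ a, f (P.star a) = Q.star (f a)) ∧
    ∀ a b, (a, b) ∈ G → pcrLe H (f a) (f b)

/-- A poc set: a PCR whose induced relation `≤_G` is antisymmetric and whose only
negligible element is `0`. -/
def IsPocSet (P : PCS α) (G : Set (α × α)) : Prop :=
  IsPCR P G ∧ (∀ a b, pcrLe G a b → pcrLe G b a → a = b) ∧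
    ∀ a, pcrLe G a (P.star a) → a = P.zero

/-- The Hamming cube: complete `*`-selections containing `1 = 0*`. -/
def Hcube (P : PCS α) : Set (Set α) :=
  {u | CompleteSel P u ∧ P.star P.zero ∈ u}

/-- `⟨S⟩ = {u ∈ H : S ⊆ u}`. -/
def halfCube (P : PCS α) (S : Set α) : Set (Set α) :=
  {u | u ∈ Hcube P ∧ S ⊆ u}

/-- A ranking on the Hamming cube. -/
def IsRanking (P : PCS α) (κ : Set (Set α) → ℕ∞) : Prop :=
  (∀ F, F ⊆ Hcube P → κ F = ⨅ u ∈ F, κ {u}) ∧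
    (∃ u ∈ Hcube P, κ {u} < ⊤) ∧ κ ∅ = ⊤

/-- A 2-ranking on the PCS `P`. -/
def Is2Ranking (P : PCS α) (ω : α → α → ℕ∞) : Prop :=
  (∀ a b, ω a b = ω b a) ∧
  (∀ a, ω P.zero a = ⊤) ∧
  (∀ a, ω a (P.star a) = ⊤) ∧
  (∀ a b, min (ω a a) (ω (P.star a) (P.star a)) = min (ω b b) (ω (P.star b) (P.star b))) ∧
  (∀ a, min (ω a a) (ω (P.star a) (P.star a)) < ⊤) ∧
  (∀ a b, ω a a = min (ω a b) (ω a (P.star b))) ∧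
  (∀ a b c, min (ω a (P.star b)) (ω b (P.star c)) ≤ ω a (P.star c))

/-- The minset `M(ω;ε)` is coherent and forward-closed for the derived PCR `D(ω;δ)`,
so its half-space is nonempty. -/
theorem stmt16 [Finite α] (P : PCS α) (ω : α → α → ℕ∞) (hω : Is2Ranking P ω)
    (δ ε : ℕ) (Gd : Set (α × α))
    (hGd : ∀ a b, (a, b) ∈ Gd ↔
      (({a, P.star a} : Set α) ∩ {b, P.star b} = ∅) ∧
      (ω a (P.star b) = ⊤ ∨
        (δ : ℕ∞) + max (ω a b) (ω (P.star a) (P.star b)) < ω a (P.star b))) :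
    Coherent P Gd {x | ω x x < ω (P.star x) (P.star x) - (ε : ℕ∞)} ∧
    upClosure Gd {x | ω x x < ω (P.star x) (P.star x) - (ε : ℕ∞)}
      = {x | ω x x < ω (P.star x) (P.star x) - (ε : ℕ∞)} ∧
    (halfspace P Gd {x | ω x x < ω (P.star x) (P.star x) - (ε : ℕ∞)}).Nonempty := by
  obtain ⟨hsym, h0, hdiag, hconst, hlt, hsplit, htri⟩ := hω
  set M : Set α := {x | ω x x < ω (P.star x) (P.star x) - (ε : ℕ∞)} with hM
  have hcan : AddLECancellable (ε : ℕ∞) :=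
    ENat.addLECancellable_of_ne_top (by simp)
  have hMiff : ∀ x, x ∈ M ↔ ω x x + ε < ω (P.star x) (P.star x) := by
    intro x
    simp only [hM, Set.mem_setOf_eq]
    exact hcan.lt_tsub_iff_right
  -- single step
  have hstep : ∀ a b, a ∈ M → (a, b) ∈ Gd → b ∈ M := by
    intro a b haM hab
    rw [hMiff] at haM ⊢
    obtain ⟨-, hcase⟩ := (hGd a b).mp hab
    -- ω a b ≤ ω a b*
    have hle : ω a b ≤ ω a (P.star b) := by
      rcases hcase with h | h
      · exact h ▸ le_top
      · exact le_of_lt (lt_of_le_of_lt (le_trans (le_max_left _ _) le_add_self) h)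
    have hab_eq : ω a a = ω a b := by
      rw [hsplit a b, min_eq_left hle]
    -- ω a a < ⊤
    have haa_lt : ω a a < ⊤ := by
      have := hlt a
      have hmin : min (ω a a) (ω (P.star a) (P.star a)) = ω a a :=
        min_eq_left (le_of_lt (lt_of_le_of_lt le_self_add haM))
      rwa [hmin] at this
    have haε_lt : ω a a + ε < ⊤ :=
      WithTop.add_lt_top.mpr ⟨haa_lt, ENat.coe_lt_top ε⟩
    -- ω b b = ω a a
    have hbb_ge : ω a a ≤ ω b b := by
      have h1 := hconst a b
      have hmin : min (ω a a) (ω (P.star a) (P.star a)) = ω a a :=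
        min_eq_left (le_of_lt (lt_of_le_of_lt le_self_add haM))
      rw [hmin] at h1
      rw [h1]; exact min_le_left _ _
    have hbb_le : ω b b ≤ ω a a := by
      calc ω b b ≤ ω b a := by rw [hsplit b a]; exact min_le_left _ _
        _ = ω a a := by rw [hsym, ← hab_eq]
    have hbb : ω b b = ω a a := le_antisymm hbb_le hbb_ge
    -- ω a* b* ≥ ω a* a*
    have hstar_ge : ω (P.star a) (P.star a) ≤ ω (P.star a) (P.star b) := by
      rw [hsplit (P.star a) b]; exact min_le_right _ _
    -- lower bounds for both components of ω b* b*
    have hcomp1 : ω a a + ε < ω (P.star b) (P.star a) := by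
      rw [hsym (P.star b) (P.star a)]
      exact lt_of_lt_of_le haM hstar_ge
    have hcomp2 : ω a a + ε < ω (P.star b) a := by
      rw [hsym (P.star b) a]
      rcases hcase with h | h
      · rw [h]; exact haε_lt
      · calc ω a a + ε < ω (P.star a) (P.star a) := haM
          _ ≤ ω (P.star a) (P.star b) := hstar_ge
          _ ≤ (δ : ℕ∞) + max (ω a b) (ω (P.star a) (P.star b)) :=
              le_trans (le_max_right _ _) le_add_self
          _ < ω a (P.star b) := h
    have hfin : ω b b + ε < ω (P.star b) (P.star b) := by
      rw [hbb]
      have := hsplit (P.star b) a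
      rw [this]
      exact lt_min hcomp2 hcomp1
    exact hfin
  -- forward closure
  have hfwd : ∀ a b, a ∈ M → pcrLe Gd a b → b ∈ M := by
    intro a b haM hle
    induction hle with
    | refl => exact haM
    | tail _ hbc ih => exact hstep _ _ ih hbc
  have hup : upClosure Gd M = M := by
    apply Set.eq_of_subset_of_subset
    · rintro b ⟨a, haM, hle⟩
      exact hfwd a b haM hle
    · intro a haM
      exact ⟨a, haM, Relation.ReflTransGen.refl⟩
  -- coherence
  have hcoh : Coherent P Gd M := by
    intro a haM b hbM hle
    have hbs : P.star b ∈ M := hfwd a _ haM hle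
    rw [hMiff] at hbM hbs
    rw [P.star_star] at hbs
    have : ω b b < ω b b :=
      calc ω b b ≤ ω b b + ε := le_self_add
        _ < ω (P.star b) (P.star b) := hbM
        _ ≤ ω (P.star b) (P.star b) + ε := le_self_add
        _ < ω b b := hbs
    exact absurd this (lt_irrefl _)
  refine ⟨hcoh, hup, ?_⟩
  -- Zorn to get a maximal coherent superset
  have hchainH : ∀ c ⊆ {T | Coherent P Gd T}, IsChain (· ⊆ ·) c → c.Nonempty →
      ∃ ub ∈ {T | Coherent P Gd T}, ∀ s ∈ c, s ⊆ ub := by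
    intro c hcS hchain hne
    refine ⟨⋃₀ c, ?_, fun s hs => Set.subset_sUnion_of_mem hs⟩
    rintro a ⟨s, hs, has⟩ b ⟨t, ht, hbt⟩ hab
    rcases hchain.total hs ht with h | h
    · exact hcS ht a (h has) b hbt hab
    · exact hcS hs a has b (h hbt) hab
  obtain ⟨m, hMm, hmS⟩ := zorn_subset_nonempty {T | Coherent P Gd T} hchainH M hcoh
  exact ⟨m, ⟨⟨hmS.prop, fun T hT hmT => (hmS.eq_of_ge hT hmT).symm⟩, hMm⟩⟩
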